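/- Let U ⊆ ℝ^{d_u}×ℝ^{d_s} be open, F : U → ℝ^{d_u} a C² map such that 𝔽(x,y) := (F(x,y), y) is a C² diffeomorphism of U onto an open set V ⊆ ℝ^{d_u}×ℝ^{d_s}, with ∂_x F(x,y) invertible everywhere. Let w : V → ℝ^{d_s} be C¹ and define the vector field φ^s : V → ℝ^{d_u}×ℝ^{d_s} by φ^s(z) := ( ∂_y F(𝔽^{-1}(z)) · w(z), w(z) ). Then for all (x,y) ∈ U: (div φ^s)(𝔽(x,y)) = Σ_{i=1}^{d_s} ∂_{y_i}[ w_i ∘ 𝔽 ](x,y) + Σ_{i=1}^{d_s} H^F_i(x,y) · (w_i ∘ 𝔽)(x,y), where H^F_i(x,y) := tr( (∂_x F(x,y))^{-1} · ∂_x(∂_{y_i} F)(x,y) ) and div denotes the Euclidean divergence on ℝ^{d_u}×ℝ^{d_s}. -/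

import Mathlib

open scoped BigOperators

lemma euclid_sum_apply {n : ℕ} {α : Type*} [Fintype α] (f : α → EuclideanSpace ℝ (Fin n))
    (a : Fin n) : (∑ b : α, f b) a = ∑ b : α, f b a := by
  have h := map_sum (EuclideanSpace.proj a (𝕜 := ℝ)) f Finset.univ
  simp only [PiLp.proj_apply] at h
  exact h

lemma euclid_decomp {n : ℕ} (x : EuclideanSpace ℝ (Fin n)) :
    x = ∑ b : Fin n, x b • EuclideanSpace.single b (1:ℝ) := by
  ext a
  rw [euclid_sum_apply]
  simp [EuclideanSpace.single_apply]

lemma pair_decomp_fst {n m : ℕ} (x : EuclideanSpace ℝ (Fin n)) :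
    ((x, (0 : EuclideanSpace ℝ (Fin m))) : EuclideanSpace ℝ (Fin n) × EuclideanSpace ℝ (Fin m))
      = ∑ b : Fin n, x b •
        ((EuclideanSpace.single b (1:ℝ), 0) :
          EuclideanSpace ℝ (Fin n) × EuclideanSpace ℝ (Fin m)) := by
  rw [Prod.ext_iff]
  refine ⟨by rw [Prod.fst_sum]; simpa using euclid_decomp x, by rw [Prod.snd_sum]; simp⟩

lemma pair_decomp_snd {n m : ℕ} (y : EuclideanSpace ℝ (Fin m)) :
    (((0 : EuclideanSpace ℝ (Fin n)), y) : EuclideanSpace ℝ (Fin n) × EuclideanSpace ℝ (Fin m))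
      = ∑ i : Fin m, y i •
        ((0, EuclideanSpace.single i (1:ℝ)) :
          EuclideanSpace ℝ (Fin n) × EuclideanSpace ℝ (Fin m)) := by
  rw [Prod.ext_iff]
  refine ⟨by rw [Prod.fst_sum]; simp, by rw [Prod.snd_sum]; simpa using euclid_decomp y⟩


/-- The partial Jacobian matrix `∂ₓF` in the first group of variables. -/
noncomputable def pJx {du ds : ℕ}
    (F : EuclideanSpace ℝ (Fin du) × EuclideanSpace ℝ (Fin ds) → EuclideanSpace ℝ (Fin du))
    (p : EuclideanSpace ℝ (Fin du) × EuclideanSpace ℝ (Fin ds)) :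
    Matrix (Fin du) (Fin du) ℝ :=
  Matrix.of fun a b =>
    fderiv ℝ (fun x => F (x, p.2) a) p.1 (EuclideanSpace.single b (1 : ℝ))

/-- The matrix `∂ₓ(∂_{y_i} F)`. -/
noncomputable def pJxy {du ds : ℕ}
    (F : EuclideanSpace ℝ (Fin du) × EuclideanSpace ℝ (Fin ds) → EuclideanSpace ℝ (Fin du))
    (i : Fin ds)
    (p : EuclideanSpace ℝ (Fin du) × EuclideanSpace ℝ (Fin ds)) :
    Matrix (Fin du) (Fin du) ℝ :=
  Matrix.of fun a b =>
    fderiv ℝ (fun x =>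
      fderiv ℝ (fun y => F (x, y) a) p.2 (EuclideanSpace.single i (1 : ℝ))) p.1
      (EuclideanSpace.single b (1 : ℝ))

/-- Euclidean divergence of a vector field on `ℝ^{dᵤ} × ℝ^{dₛ}`. -/
noncomputable def divP {du ds : ℕ}
    (f : EuclideanSpace ℝ (Fin du) × EuclideanSpace ℝ (Fin ds) →
      EuclideanSpace ℝ (Fin du) × EuclideanSpace ℝ (Fin ds))
    (z : EuclideanSpace ℝ (Fin du) × EuclideanSpace ℝ (Fin ds)) : ℝ :=
  (∑ a : Fin du, fderiv ℝ (fun z' => (f z').1 a) z (EuclideanSpace.single a (1 : ℝ), 0)) +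
    ∑ i : Fin ds, fderiv ℝ (fun z' => (f z').2 i) z (0, EuclideanSpace.single i (1 : ℝ))

set_option maxHeartbeats 1000000 in
/-- divergence of the stable vector field
`φˢ(z) = (∂_yF(𝔽⁻¹ z) · w(z), w(z))` in the foliation coordinates `𝔽(x,y) = (F(x,y),y)`:
`(div φˢ)(𝔽(x,y)) = ∑ᵢ ∂_{yᵢ}[wᵢ∘𝔽](x,y) + ∑ᵢ H^F_i(x,y) (wᵢ∘𝔽)(x,y)`, where
`H^F_i = tr((∂ₓF)⁻¹ ∂ₓ∂_{yᵢ}F)`. -/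
theorem statement12 {du ds : ℕ} (hdu : 0 < du) (hds : 0 < ds)
    (U V : Set (EuclideanSpace ℝ (Fin du) × EuclideanSpace ℝ (Fin ds)))
    (hU : IsOpen U) (hV : IsOpen V)
    (F : EuclideanSpace ℝ (Fin du) × EuclideanSpace ℝ (Fin ds) → EuclideanSpace ℝ (Fin du))
    (hF : ContDiffOn ℝ 2 F U)
    (hbij : Set.BijOn (fun p => (F p, p.2)) U V)
    (Finv : EuclideanSpace ℝ (Fin du) × EuclideanSpace ℝ (Fin ds) →
      EuclideanSpace ℝ (Fin du) × EuclideanSpace ℝ (Fin ds))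
    (hFinvMaps : Set.MapsTo Finv V U)
    (hFinvL : ∀ p ∈ U, Finv (F p, p.2) = p)
    (hFinvR : ∀ z ∈ V, (F (Finv z), (Finv z).2) = z)
    (hFinvsm : ContDiffOn ℝ 2 Finv V)
    (hA : ∀ p ∈ U, IsUnit (pJx F p))
    (w : EuclideanSpace ℝ (Fin du) × EuclideanSpace ℝ (Fin ds) → EuclideanSpace ℝ (Fin ds))
    (hw : ContDiffOn ℝ 1 w V) :
    ∀ p ∈ U,
      divP (fun z => (fderiv ℝ (fun y => F ((Finv z).1, y)) (Finv z).2 (w z), w z))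
          (F p, p.2) =
        (∑ i : Fin ds,
          fderiv ℝ (fun y => w (F (p.1, y), y) i) p.2 (EuclideanSpace.single i (1 : ℝ))) +
        ∑ i : Fin ds,
          Matrix.trace ((pJx F p)⁻¹ * pJxy F i p) * w (F p, p.2) i := by
  intro p hp
  have hpV : (F p, p.2) ∈ V := hbij.mapsTo hp
  set z₀ : EuclideanSpace ℝ (Fin du) × EuclideanSpace ℝ (Fin ds) := (F p, p.2) with hz₀def
  have hFip : Finv z₀ = p := hFinvL p hp
  -- basic differentiability facts
  have hFd : ∀ q ∈ U, DifferentiableAt ℝ F q := fun q hq =>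
    (hF.contDiffAt (hU.mem_nhds hq)).differentiableAt (by norm_num)
  have hF2 : ContDiffAt ℝ 2 F p := hF.contDiffAt (hU.mem_nhds hp)
  have hDF1 : ContDiffAt ℝ 1 (fderiv ℝ F) p := hF2.fderiv_right (by norm_num)
  set S := fderiv ℝ (fderiv ℝ F) p with hSdef
  have hS : HasFDerivAt (fderiv ℝ F) S p := (hDF1.differentiableAt (by norm_num)).hasFDerivAt
  have hInvd : DifferentiableAt ℝ Finv z₀ :=
    (hFinvsm.contDiffAt (hV.mem_nhds hpV)).differentiableAt (by norm_num)
  set T := fderiv ℝ Finv z₀ with hTdef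
  have hwd : DifferentiableAt ℝ w z₀ := (hw.contDiffAt (hV.mem_nhds hpV)).differentiableAt (by norm_num)
  set Dw := fderiv ℝ w z₀ with hDwdef
  -- slice derivative in y
  have hsliceY : ∀ q ∈ U, HasFDerivAt (fun y => F (q.1, y))
      ((fderiv ℝ F q).comp
        (ContinuousLinearMap.inr ℝ (EuclideanSpace ℝ (Fin du)) (EuclideanSpace ℝ (Fin ds))))
      q.2 := fun q hq =>
    ((hFd q hq).hasFDerivAt).comp q.2 (hasFDerivAt_prodMk_right (𝕜 := ℝ) q.1 q.2)
  -- derivative of Finv : the two structural identities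
  have hTfst : (fderiv ℝ F p).comp T =
      ContinuousLinearMap.fst ℝ (EuclideanSpace ℝ (Fin du)) (EuclideanSpace ℝ (Fin ds)) := by
    have hF' : HasFDerivAt F (fderiv ℝ F p) (Finv z₀) := hFip ▸ (hFd p hp).hasFDerivAt
    have hc : HasFDerivAt (fun z => F (Finv z)) ((fderiv ℝ F p).comp T) z₀ :=
      hF'.comp z₀ hInvd.hasFDerivAt
    have hev : (fun z => F (Finv z)) =ᶠ[nhds z₀] Prod.fst := by
      filter_upwards [hV.mem_nhds hpV] with z hz
      exact (Prod.ext_iff.mp (hFinvR z hz)).1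
    have hc2 : HasFDerivAt (fun z => F (Finv z))
        (ContinuousLinearMap.fst ℝ (EuclideanSpace ℝ (Fin du)) (EuclideanSpace ℝ (Fin ds))) z₀ :=
      (hasFDerivAt_fst).congr_of_eventuallyEq hev
    exact hc.unique hc2
  have hTsnd : (ContinuousLinearMap.snd ℝ (EuclideanSpace ℝ (Fin du))
        (EuclideanSpace ℝ (Fin ds))).comp T =
      ContinuousLinearMap.snd ℝ (EuclideanSpace ℝ (Fin du)) (EuclideanSpace ℝ (Fin ds)) := by
    have hc : HasFDerivAt (fun z => (Finv z).2)
        ((ContinuousLinearMap.snd ℝ (EuclideanSpace ℝ (Fin du))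
          (EuclideanSpace ℝ (Fin ds))).comp T) z₀ :=
      (ContinuousLinearMap.snd ℝ (EuclideanSpace ℝ (Fin du))
        (EuclideanSpace ℝ (Fin ds))).hasFDerivAt.comp z₀ hInvd.hasFDerivAt
    have hev : (fun z => (Finv z).2) =ᶠ[nhds z₀] Prod.snd := by
      filter_upwards [hV.mem_nhds hpV] with z hz
      show (Finv z).2 = z.2
      exact (Prod.ext_iff.mp (hFinvR z hz)).2
    have hc2 : HasFDerivAt (fun z => (Finv z).2)
        (ContinuousLinearMap.snd ℝ (EuclideanSpace ℝ (Fin du)) (EuclideanSpace ℝ (Fin ds))) z₀ :=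
      (hasFDerivAt_snd).congr_of_eventuallyEq hev
    exact hc.unique hc2
  -- the columns of the inverse Jacobian
  set cvec : Fin du → EuclideanSpace ℝ (Fin du) :=
    fun a => (T (EuclideanSpace.single a (1:ℝ), 0)).1 with hcvecdef
  have hT : ∀ a, T (EuclideanSpace.single a (1:ℝ), 0) = (cvec a, 0) := by
    intro a
    refine Prod.ext rfl ?_
    have h := DFunLike.congr_fun hTsnd (EuclideanSpace.single a (1:ℝ), 0)
    simpa using h
  have hFc : ∀ a, fderiv ℝ F p (cvec a, 0) = EuclideanSpace.single a (1:ℝ) := by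
    intro a
    have h := DFunLike.congr_fun hTfst (EuclideanSpace.single a (1:ℝ), 0)
    simp only [ContinuousLinearMap.coe_comp', Function.comp_apply,
      ContinuousLinearMap.coe_fst'] at h
    rw [hT a] at h
    simpa using h
  -- entries of pJx in terms of the full derivative
  have hpJx : ∀ a b, pJx F p a b =
      fderiv ℝ F p (EuclideanSpace.single b (1:ℝ), 0) a := by
    intro a b
    have hx : HasFDerivAt (fun x => F (x, p.2))
        ((fderiv ℝ F p).comp
          (ContinuousLinearMap.inl ℝ (EuclideanSpace ℝ (Fin du)) (EuclideanSpace ℝ (Fin ds))))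
        p.1 :=
      ((hFd p hp).hasFDerivAt).comp p.1 (hasFDerivAt_prodMk_left (𝕜 := ℝ) p.1 p.2)
    have hxa : HasFDerivAt (fun x => F (x, p.2) a)
        ((EuclideanSpace.proj a (𝕜 := ℝ)).comp
          ((fderiv ℝ F p).comp
            (ContinuousLinearMap.inl ℝ (EuclideanSpace ℝ (Fin du)) (EuclideanSpace ℝ (Fin ds)))))
        p.1 :=
      ((EuclideanSpace.proj a (𝕜 := ℝ)).hasFDerivAt).comp p.1 hx
    show (Matrix.of fun a b =>
      fderiv ℝ (fun x => F (x, p.2) a) p.1 (EuclideanSpace.single b (1 : ℝ))) a b = _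
    rw [Matrix.of_apply, hxa.fderiv]
    simp
  -- expansion of fderiv F p applied componentwise
  have hexp : ∀ (x : EuclideanSpace ℝ (Fin du)) (a' : Fin du),
      fderiv ℝ F p (x, 0) a' =
        ∑ b, x b * fderiv ℝ F p (EuclideanSpace.single b (1:ℝ), 0) a' := by
    intro x a'
    rw [pair_decomp_fst x, map_sum, euclid_sum_apply]
    refine Finset.sum_congr rfl fun b _ => ?_
    rw [map_smul]
    simp
  -- matrix inverse identity
  have hdet : IsUnit (pJx F p).det := (Matrix.isUnit_iff_isUnit_det _).mp (hA p hp)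
  have hinvmul : (pJx F p)⁻¹ * pJx F p = 1 := Matrix.nonsing_inv_mul _ hdet
  have hcinv : ∀ a b, cvec a b = (pJx F p)⁻¹ b a := by
    intro a b
    have h5 : (pJx F p).mulVec (fun b' => cvec a b') =
        fun a' => (EuclideanSpace.single a (1:ℝ) : EuclideanSpace ℝ (Fin du)) a' := by
      funext a'
      have := hFc a
      have h6 : fderiv ℝ F p (cvec a, 0) a' = EuclideanSpace.single a (1:ℝ) a' := by rw [this]
      rw [hexp (cvec a) a'] at h6
      rw [Matrix.mulVec, dotProduct]
      rw [← h6]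
      refine Finset.sum_congr rfl fun b' _ => ?_
      rw [hpJx a' b', mul_comm]
    calc cvec a b = ((pJx F p)⁻¹ * pJx F p).mulVec (fun b' => cvec a b') b := by
          rw [hinvmul, Matrix.one_mulVec]
      _ = (pJx F p)⁻¹.mulVec ((pJx F p).mulVec (fun b' => cvec a b')) b := by
          rw [Matrix.mulVec_mulVec]
      _ = (pJx F p)⁻¹ b a := by
          rw [h5]
          rw [Matrix.mulVec, dotProduct]
          simp [EuclideanSpace.single_apply, mul_ite]
  -- second-derivative entries
  have hpJxy : ∀ (i : Fin ds) (a b : Fin du), pJxy F i p a b =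
      S (EuclideanSpace.single b (1:ℝ), 0) (0, EuclideanSpace.single i (1:ℝ)) a := by
    intro i a b
    have hUx : {x : EuclideanSpace ℝ (Fin du) | (x, p.2) ∈ U} ∈ nhds p.1 := by
      have hcont : Continuous (fun x : EuclideanSpace ℝ (Fin du) => (x, p.2)) :=
        continuous_id.prodMk continuous_const
      exact hcont.continuousAt.preimage_mem_nhds (hU.mem_nhds hp)
    have hev : (fun x => fderiv ℝ (fun y => F (x, y) a) p.2 (EuclideanSpace.single i (1:ℝ)))
        =ᶠ[nhds p.1]
        (fun x => fderiv ℝ F (x, p.2) (0, EuclideanSpace.single i (1:ℝ)) a) := by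
      filter_upwards [hUx] with x hx
      have h1 := hsliceY (x, p.2) hx
      have h2 : HasFDerivAt (fun y => F (x, y) a)
          ((EuclideanSpace.proj a (𝕜 := ℝ)).comp
            ((fderiv ℝ F (x, p.2)).comp
              (ContinuousLinearMap.inr ℝ (EuclideanSpace ℝ (Fin du))
                (EuclideanSpace ℝ (Fin ds))))) p.2 :=
        ((EuclideanSpace.proj a (𝕜 := ℝ)).hasFDerivAt).comp p.2 h1
      rw [h2.fderiv]
      simp
    have h6 := hev.fderiv_eq (𝕜 := ℝ)
    have h7 : HasFDerivAt (fun x => fderiv ℝ F (x, p.2))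
        (S.comp (ContinuousLinearMap.inl ℝ (EuclideanSpace ℝ (Fin du))
          (EuclideanSpace ℝ (Fin ds)))) p.1 :=
      hS.comp p.1 (hasFDerivAt_prodMk_left (𝕜 := ℝ) p.1 p.2)
    have h8 := h7.clm_apply
      (hasFDerivAt_const ((0 : EuclideanSpace ℝ (Fin du)),
        EuclideanSpace.single i (1:ℝ)) p.1)
    have h9 : HasFDerivAt
        (fun x => fderiv ℝ F (x, p.2) (0, EuclideanSpace.single i (1:ℝ)) a)
        ((EuclideanSpace.proj a (𝕜 := ℝ)).comp
          ((fderiv ℝ F (p.1, p.2)).comp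
              (0 : EuclideanSpace ℝ (Fin du) →L[ℝ]
                EuclideanSpace ℝ (Fin du) × EuclideanSpace ℝ (Fin ds)) +
            (S.comp (ContinuousLinearMap.inl ℝ (EuclideanSpace ℝ (Fin du))
              (EuclideanSpace ℝ (Fin ds)))).flip
              ((0 : EuclideanSpace ℝ (Fin du)), EuclideanSpace.single i (1:ℝ)))) p.1 :=
      ((EuclideanSpace.proj a (𝕜 := ℝ)).hasFDerivAt).comp p.1 h8
    show (Matrix.of fun a b => fderiv ℝ (fun x =>
      fderiv ℝ (fun y => F (x, y) a) p.2 (EuclideanSpace.single i (1 : ℝ))) p.1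
      (EuclideanSpace.single b (1 : ℝ))) a b = _
    rw [Matrix.of_apply, h6, h9.fderiv]
    simp
  -- main computation of the first-block divergence terms
  have hterm1 : ∀ a : Fin du,
      fderiv ℝ (fun z' =>
          (fderiv ℝ (fun y => F ((Finv z').1, y)) (Finv z').2 (w z')) a) z₀
        (EuclideanSpace.single a (1:ℝ), 0)
      = ∑ i : Fin ds, (w z₀ i * S (cvec a, 0) (0, EuclideanSpace.single i (1:ℝ)) a
          + fderiv ℝ F p (0, EuclideanSpace.single i (1:ℝ)) a *
            Dw (EuclideanSpace.single a (1:ℝ), 0) i) := by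
    intro a
    have hgev : (fun z' =>
        (fderiv ℝ (fun y => F ((Finv z').1, y)) (Finv z').2 (w z')) a)
        =ᶠ[nhds z₀] (fun z' => ∑ i : Fin ds, w z' i *
          (fderiv ℝ F (Finv z')
            ((0 : EuclideanSpace ℝ (Fin du)), EuclideanSpace.single i (1:ℝ)) a)) := by
      filter_upwards [hV.mem_nhds hpV] with z hz
      have hq := hFinvMaps hz
      have h1 := (hsliceY (Finv z) hq).fderiv
      show (fderiv ℝ (fun y => F ((Finv z).1, y)) (Finv z).2) (w z) a = _
      rw [h1]
      have h2 : ((fderiv ℝ F (Finv z)).comp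
          (ContinuousLinearMap.inr ℝ (EuclideanSpace ℝ (Fin du))
            (EuclideanSpace ℝ (Fin ds)))) (w z)
          = fderiv ℝ F (Finv z) (0, w z) := by simp
      rw [h2, pair_decomp_snd (w z), map_sum, euclid_sum_apply]
      refine Finset.sum_congr rfl fun i _ => ?_
      rw [map_smul]
      simp
    rw [hgev.fderiv_eq]
    have hS' : HasFDerivAt (fderiv ℝ F) S (Finv z₀) := by rw [hFip]; exact hS
    have hΨ : HasFDerivAt (fun z => fderiv ℝ F (Finv z)) (S.comp T) z₀ :=
      hS'.comp z₀ hInvd.hasFDerivAt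
    have hvia : ∀ i : Fin ds, HasFDerivAt
        (fun z => fderiv ℝ F (Finv z)
          ((0 : EuclideanSpace ℝ (Fin du)), EuclideanSpace.single i (1:ℝ)) a)
        ((EuclideanSpace.proj a (𝕜 := ℝ)).comp
          ((fderiv ℝ F (Finv z₀)).comp
              (0 : EuclideanSpace ℝ (Fin du) × EuclideanSpace ℝ (Fin ds) →L[ℝ]
                EuclideanSpace ℝ (Fin du) × EuclideanSpace ℝ (Fin ds)) +
            (S.comp T).flip
              ((0 : EuclideanSpace ℝ (Fin du)), EuclideanSpace.single i (1:ℝ)))) z₀ :=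
      fun i => ((EuclideanSpace.proj a (𝕜 := ℝ)).hasFDerivAt).comp z₀
        (hΨ.clm_apply (hasFDerivAt_const _ z₀))
    have hwia : ∀ i : Fin ds, HasFDerivAt (fun z => w z i)
        ((EuclideanSpace.proj i (𝕜 := ℝ)).comp Dw) z₀ :=
      fun i => ((EuclideanSpace.proj i (𝕜 := ℝ)).hasFDerivAt).comp z₀ hwd.hasFDerivAt
    have hsum : HasFDerivAt
        (fun z => ∑ i : Fin ds, w z i *
          (fderiv ℝ F (Finv z)
            ((0 : EuclideanSpace ℝ (Fin du)), EuclideanSpace.single i (1:ℝ)) a))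
        (∑ i : Fin ds, (w z₀ i •
            ((EuclideanSpace.proj a (𝕜 := ℝ)).comp
              ((fderiv ℝ F (Finv z₀)).comp
                  (0 : EuclideanSpace ℝ (Fin du) × EuclideanSpace ℝ (Fin ds) →L[ℝ]
                    EuclideanSpace ℝ (Fin du) × EuclideanSpace ℝ (Fin ds)) +
                (S.comp T).flip
                  ((0 : EuclideanSpace ℝ (Fin du)), EuclideanSpace.single i (1:ℝ))))
          + (fderiv ℝ F (Finv z₀)
              ((0 : EuclideanSpace ℝ (Fin du)), EuclideanSpace.single i (1:ℝ)) a) •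
            ((EuclideanSpace.proj i (𝕜 := ℝ)).comp Dw))) z₀ :=
      HasFDerivAt.fun_sum fun i _ => (hwia i).mul (hvia i)
    rw [hsum.fderiv, ContinuousLinearMap.sum_apply]
    refine Finset.sum_congr rfl fun i _ => ?_
    simp only [ContinuousLinearMap.add_apply, ContinuousLinearMap.smul_apply,
      ContinuousLinearMap.coe_comp', Function.comp_apply, ContinuousLinearMap.zero_apply,
      ContinuousLinearMap.comp_zero, ContinuousLinearMap.flip_apply, PiLp.proj_apply,
      smul_eq_mul, hFip, hT a, zero_add]
  -- second-block divergence terms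
  have hwia0 : ∀ i : Fin ds, HasFDerivAt (fun z => w z i)
      ((EuclideanSpace.proj i (𝕜 := ℝ)).comp Dw) z₀ :=
    fun i => ((EuclideanSpace.proj i (𝕜 := ℝ)).hasFDerivAt).comp z₀ hwd.hasFDerivAt
  have hterm2 : ∀ i : Fin ds,
      fderiv ℝ (fun z' => w z' i) z₀ (0, EuclideanSpace.single i (1:ℝ))
        = Dw (0, EuclideanSpace.single i (1:ℝ)) i := by
    intro i
    rw [(hwia0 i).fderiv]
    simp
  -- right-hand side terms
  have hRHS : ∀ i : Fin ds,
      fderiv ℝ (fun y => w (F (p.1, y), y) i) p.2 (EuclideanSpace.single i (1:ℝ))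
        = Dw (fderiv ℝ F p (0, EuclideanSpace.single i (1:ℝ)),
            EuclideanSpace.single i (1:ℝ)) i := by
    intro i
    have hΦ : HasFDerivAt (fun y => ((F (p.1, y) : EuclideanSpace ℝ (Fin du)), y))
        (((fderiv ℝ F p).comp
          (ContinuousLinearMap.inr ℝ (EuclideanSpace ℝ (Fin du))
            (EuclideanSpace ℝ (Fin ds)))).prod
          (ContinuousLinearMap.id ℝ (EuclideanSpace ℝ (Fin ds)))) p.2 :=
      (hsliceY p hp).prodMk (hasFDerivAt_id p.2)
    have hwz : HasFDerivAt (fun z => w z i)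
        ((EuclideanSpace.proj i (𝕜 := ℝ)).comp Dw)
        ((fun y => ((F (p.1, y) : EuclideanSpace ℝ (Fin du)), y)) p.2) := hwia0 i
    have hcomp : HasFDerivAt ((fun z => w z i) ∘ (fun y =>
          ((F (p.1, y) : EuclideanSpace ℝ (Fin du)), y)))
        (((EuclideanSpace.proj i (𝕜 := ℝ)).comp Dw).comp
          ((((fderiv ℝ F p).comp
            (ContinuousLinearMap.inr ℝ (EuclideanSpace ℝ (Fin du))
              (EuclideanSpace ℝ (Fin ds)))).prod
            (ContinuousLinearMap.id ℝ (EuclideanSpace ℝ (Fin ds)))))) p.2 :=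
      HasFDerivAt.comp (f := fun y =>
        ((F (p.1, y) : EuclideanSpace ℝ (Fin du)), y)) p.2 hwz hΦ
    rw [show (fun y => w (F (p.1, y), y) i) = ((fun z => w z i) ∘ (fun y =>
          ((F (p.1, y) : EuclideanSpace ℝ (Fin du)), y))) from rfl]
    rw [hcomp.fderiv]
    simp
  have hDwsplit : ∀ i : Fin ds,
      Dw (fderiv ℝ F p (0, EuclideanSpace.single i (1:ℝ)),
          EuclideanSpace.single i (1:ℝ)) i
        = (∑ a : Fin du, fderiv ℝ F p (0, EuclideanSpace.single i (1:ℝ)) a *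
            Dw (EuclideanSpace.single a (1:ℝ), 0) i)
          + Dw (0, EuclideanSpace.single i (1:ℝ)) i := by
    intro i
    have h1 : ((fderiv ℝ F p (0, EuclideanSpace.single i (1:ℝ)) :
          EuclideanSpace ℝ (Fin du)),
        (EuclideanSpace.single i (1:ℝ) : EuclideanSpace ℝ (Fin ds)))
        = (fderiv ℝ F p (0, EuclideanSpace.single i (1:ℝ)), (0 : EuclideanSpace ℝ (Fin ds)))
          + ((0 : EuclideanSpace ℝ (Fin du)), EuclideanSpace.single i (1:ℝ)) := by
      rw [Prod.mk_add_mk, add_zero, zero_add]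
    rw [h1, map_add, PiLp.add_apply]
    congr 1
    rw [pair_decomp_fst (fderiv ℝ F p (0, EuclideanSpace.single i (1:ℝ))), map_sum,
      euclid_sum_apply]
    refine Finset.sum_congr rfl fun a _ => ?_
    rw [map_smul]
    simp
  -- expansion of S in the first slot
  have hSexp : ∀ (i : Fin ds) (a : Fin du),
      S (cvec a, 0) (0, EuclideanSpace.single i (1:ℝ)) a
        = ∑ b : Fin du, cvec a b *
            S (EuclideanSpace.single b (1:ℝ), 0) (0, EuclideanSpace.single i (1:ℝ)) a := by
    intro i a
    calc S (cvec a, 0) (0, EuclideanSpace.single i (1:ℝ)) a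
        = (∑ b : Fin du, S (cvec a b • (EuclideanSpace.single b (1:ℝ), 0)))
            (0, EuclideanSpace.single i (1:ℝ)) a := by
          rw [pair_decomp_fst (cvec a), map_sum]
      _ = ∑ b : Fin du, (S (cvec a b • (EuclideanSpace.single b (1:ℝ), 0))
            (0, EuclideanSpace.single i (1:ℝ))) a := by
          rw [ContinuousLinearMap.sum_apply, euclid_sum_apply]
      _ = ∑ b : Fin du, cvec a b *
            S (EuclideanSpace.single b (1:ℝ), 0) (0, EuclideanSpace.single i (1:ℝ)) a := by
          refine Finset.sum_congr rfl fun b _ => ?_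
          rw [map_smul]
          simp
  have htrace : ∀ i : Fin ds,
      Matrix.trace ((pJx F p)⁻¹ * pJxy F i p)
        = ∑ a : Fin du, S (cvec a, 0) (0, EuclideanSpace.single i (1:ℝ)) a := by
    intro i
    have h1 : Matrix.trace ((pJx F p)⁻¹ * pJxy F i p)
        = ∑ b : Fin du, ∑ a : Fin du, (pJx F p)⁻¹ b a * pJxy F i p a b := by
      simp [Matrix.trace, Matrix.mul_apply, Matrix.diag]
    rw [h1, Finset.sum_comm]
    refine Finset.sum_congr rfl fun a _ => ?_
    rw [hSexp i a]
    refine Finset.sum_congr rfl fun b _ => ?_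
    rw [hcinv a b, hpJxy i a b]
  -- assemble
  rw [divP]
  simp only []
  simp only [hterm1, hterm2, hRHS, hDwsplit, htrace]
  have e1 : ∑ a : Fin du, ∑ i : Fin ds,
        w z₀ i * S (cvec a, 0) (0, EuclideanSpace.single i (1:ℝ)) a
      = ∑ i : Fin ds, (∑ a : Fin du,
          S (cvec a, 0) (0, EuclideanSpace.single i (1:ℝ)) a) * w z₀ i := by
    rw [Finset.sum_comm]
    refine Finset.sum_congr rfl fun i _ => ?_
    rw [Finset.sum_mul]
    exact Finset.sum_congr rfl fun a _ => mul_comm _ _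
  have e2 : ∑ a : Fin du, ∑ i : Fin ds,
        fderiv ℝ F p (0, EuclideanSpace.single i (1:ℝ)) a *
          Dw (EuclideanSpace.single a (1:ℝ), 0) i
      = ∑ i : Fin ds, ∑ a : Fin du,
        fderiv ℝ F p (0, EuclideanSpace.single i (1:ℝ)) a *
          Dw (EuclideanSpace.single a (1:ℝ), 0) i := Finset.sum_comm
  simp only [Finset.sum_add_distrib]
  rw [e1, e2]
  ring
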